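/- Suppose X satisfies the δ-annular decay property, β > 0, α > 0 and α + β ≤ δ. If u is β-Hölder continuous and 𝓜_α u ≢ ∞, then 𝓜_α u is (α+β)-Hölder continuous with ‖𝓜_α u‖_{C^{0,α+β}} ≤ C ‖u‖_{C^{0,β}}. -/

import Mathlib

open MeasureTheory Metric
open scoped ENNReal

/-- The fractional maximal function `𝓜_α u(x) = sup_{r>0} r^α ⨍_{B(x,r)} |u| dμ`. -/
noncomputable def frMax {X : Type*} [MetricSpace X] [MeasurableSpace X]
    (μ : Measure X) (α : ℝ) (u : X → ℝ) (x : X) : ℝ :=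
  sSup {t : ℝ | ∃ r : ℝ, 0 < r ∧ t = r ^ α * ⨍ y in ball x r, |u y| ∂μ}

/-- A pointwise inequality on a (possibly non-measurable) set between functions that are
a.e. strongly measurable for the restricted measure holds a.e. for the restricted measure. -/
private lemma ae_restrict_le_of_forall_mem
    {X : Type*} [MeasurableSpace X] {μ : Measure X} {t : Set X} {h g : X → ℝ}
    (hh : AEStronglyMeasurable h (μ.restrict t))
    (hg : AEStronglyMeasurable g (μ.restrict t))
    (hle : ∀ x ∈ t, h x ≤ g x) : h ≤ᵐ[μ.restrict t] g := by
  obtain ⟨h', h'm, hh'⟩ := hh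
  obtain ⟨g', g'm, hg'⟩ := hg
  have hEmeas : MeasurableSet {x | g' x < h' x} :=
    measurableSet_lt g'm.measurable h'm.measurable
  have hnull1 : μ.restrict t {x | ¬ h x = h' x} = 0 := ae_iff.mp hh'
  have hnull2 : μ.restrict t {x | ¬ g x = g' x} = 0 := ae_iff.mp hg'
  have hbad : μ.restrict t ({x | ¬ h x = h' x} ∪ {x | ¬ g x = g' x}) = 0 :=
    measure_union_null hnull1 hnull2
  have hsub : {x | g' x < h' x} ∩ t ⊆
      ({x | ¬ h x = h' x} ∪ {x | ¬ g x = g' x}) ∩ t := by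
    rintro x ⟨hxE, hxt⟩
    refine ⟨?_, hxt⟩
    by_contra hcon
    push_neg at hcon
    simp only [Set.mem_union, Set.mem_setOf_eq, not_or, not_not] at hcon
    obtain ⟨e1, e2⟩ := hcon
    have := hle x hxt
    rw [e1, e2] at this
    exact absurd hxE (not_lt.2 this)
  have h0 : μ.restrict t {x | g' x < h' x} = 0 := by
    rw [Measure.restrict_apply hEmeas]
    refine le_antisymm ?_ zero_le
    calc μ ({x | g' x < h' x} ∩ t)
        ≤ μ (({x | ¬ h x = h' x} ∪ {x | ¬ g x = g' x}) ∩ t) := measure_mono hsub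
      _ ≤ μ.restrict t ({x | ¬ h x = h' x} ∪ {x | ¬ g x = g' x}) :=
          Measure.le_restrict_apply _ _
      _ = 0 := hbad
  have hae : ∀ᵐ x ∂μ.restrict t, ¬ g' x < h' x := by
    rw [ae_iff]
    simpa using h0
  filter_upwards [hh', hg', hae] with x hx1 hx2 hx3
  rw [hx1, hx2]
  exact not_lt.1 hx3

/-- Monotonicity of set integrals from a pointwise bound on the (possibly non-measurable)
set of integration. -/
private lemma my_setIntegral_mono
    {X : Type*} [MeasurableSpace X] {μ : Measure X} {t : Set X} {h g : X → ℝ}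
    (hh : IntegrableOn h t μ) (hg : IntegrableOn g t μ)
    (hle : ∀ x ∈ t, h x ≤ g x) : ∫ x in t, h x ∂μ ≤ ∫ x in t, g x ∂μ :=
  setIntegral_mono_ae_restrict hh hg
    (ae_restrict_le_of_forall_mem hh.aestronglyMeasurable hg.aestronglyMeasurable hle)

set_option maxHeartbeats 1000000 in
/-- Core estimate: comparison of `r^α ⨍_{B(a,r)}|u|` with the average over the
larger ball `B(b, r+d)`. -/
private lemma frMax_core
    {X : Type*} [MetricSpace X] [MeasurableSpace X] (μ : Measure X)
    (hball : ∀ (z : X) (s : ℝ), 0 < s → 0 < μ (ball z s) ∧ μ (ball z s) < ∞)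
    (δ K : ℝ) (hK : 0 < K)
    (hann : ∀ (z : X) (R h : ℝ), 0 < R → 0 < h → h < R →
      μ (ball z R \ ball z (R - h)) ≤ ENNReal.ofReal (K * (h / R) ^ δ) * μ (ball z R))
    (α β : ℝ) (hα : 0 < α) (hβ : 0 < β) (hαβ : α + β ≤ δ)
    (u : X → ℝ) (N : ℝ) (hN : 0 ≤ N)
    (hint : ∀ (z : X) (s : ℝ), 0 < s → IntegrableOn u (ball z s) μ)
    (hHolder : ∀ z w : X, |u z - u w| ≤ N * dist z w ^ β)
    (a b : X) (hd : 0 < dist a b) (r : ℝ) (hr : 0 < r) :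
    r ^ α * ⨍ z in ball a r, |u z| ∂μ ≤
      (r + dist a b) ^ α * ⨍ z in ball b (r + dist a b), |u z| ∂μ
        + ((2:ℝ) ^ (α + 2*β) + K * 2 ^ (δ + β)) * N * dist a b ^ (α + β) := by
  set d := dist a b with hdd
  set s := r + d with hss
  have hs : 0 < s := by positivity
  have hds : d < s := by rw [hss]; linarith
  have hrs : r < s := by rw [hss]; linarith
  set B₁ := ball a r with hB₁
  set B₂ := ball b s with hB₂
  have hsub : B₁ ⊆ B₂ := ball_subset_ball' le_rfl
  have hμ₁ := hball a r hr
  have hμ₂ := hball b s hs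
  set m₁ := (μ B₁).toReal with hm₁d
  set m₂ := (μ B₂).toReal with hm₂d
  have hm₁ : 0 < m₁ := ENNReal.toReal_pos hμ₁.1.ne' hμ₁.2.ne
  have hm₂ : 0 < m₂ := ENNReal.toReal_pos hμ₂.1.ne' hμ₂.2.ne
  have hi₂ : IntegrableOn (fun z => |u z|) B₂ μ := (hint b s hs).abs
  have hi₁ : IntegrableOn (fun z => |u z|) B₁ μ := hi₂.mono_set hsub
  set I₁ := ∫ z in B₁, |u z| ∂μ with hI₁
  set I₂ := ∫ z in B₂, |u z| ∂μ with hI₂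
  have hI₁nn : 0 ≤ I₁ := by
    rw [hI₁]
    exact setIntegral_nonneg_of_ae_restrict (Filter.Eventually.of_forall fun z => abs_nonneg _)
  set c := N * (2*s) ^ β with hc
  have hcnn : 0 ≤ c := by positivity
  set F := I₁ / m₁ with hF
  have hFnn : 0 ≤ F := div_nonneg hI₁nn hm₁.le
  -- pointwise lower bound on |u| over B₂
  have key1 : ∀ w ∈ B₂, F - c ≤ |u w| := by
    intro w hw
    have h1 : I₁ ≤ m₁ * (|u w| + c) := by
      have hmono : ∫ z in B₁, |u z| ∂μ ≤ ∫ z in B₁, (|u w| + c) ∂μ := by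
        apply my_setIntegral_mono hi₁ (integrableOn_const hμ₁.2.ne)
        intro z hz
        have h1' : dist z a < r := mem_ball.1 hz
        have h2' : dist w b < s := mem_ball.1 hw
        have h2'' : dist b w < s := by rw [dist_comm]; exact h2'
        have hdzw : dist z w ≤ 2 * s := by
          have h4 := dist_triangle4 z a b w
          have : r + d + s ≤ 2 * s := by rw [hss]; linarith
          linarith
        have h3 : |u z| - |u w| ≤ |u z - u w| := abs_sub_abs_le_abs_sub _ _
        have h4 : N * dist z w ^ β ≤ c := by
          rw [hc]
          exact mul_le_mul_of_nonneg_left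
            (Real.rpow_le_rpow dist_nonneg hdzw hβ.le) hN
        have h5 := hHolder z w
        linarith
      rwa [setIntegral_const, smul_eq_mul, measureReal_def, ← hm₁d] at hmono
    have h2 : I₁ / m₁ ≤ |u w| + c := (div_le_iff₀ hm₁).2 (by linarith [h1])
    rw [hF]
    linarith
  -- excess measure
  set E := m₂ - m₁ with hE
  have hEnn : 0 ≤ E := by
    rw [hE]
    have : μ B₁ ≤ μ B₂ := measure_mono hsub
    have := ENNReal.toReal_mono hμ₂.2.ne this
    linarith
  -- lower bound for I₂ via the nonnegative function |u| + c - F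
  have hlow : I₁ + E * (F - c) ≤ I₂ := by
    have hiφ₂ : IntegrableOn (fun z => |u z| + (c - F)) B₂ μ :=
      hi₂.add (integrableOn_const hμ₂.2.ne)
    have hφnn : 0 ≤ᵐ[μ.restrict B₂] fun z => |u z| + (c - F) := by
      apply ae_restrict_le_of_forall_mem aestronglyMeasurable_const
        hiφ₂.aestronglyMeasurable
      intro x hx
      have := key1 x hx
      show (0:ℝ) ≤ |u x| + (c - F)
      linarith
    have hmono : ∫ z in B₁, (|u z| + (c - F)) ∂μ ≤ ∫ z in B₂, (|u z| + (c - F)) ∂μ :=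
      setIntegral_mono_set hiφ₂ hφnn (HasSubset.Subset.eventuallyLE hsub)
    have e1 : ∫ z in B₁, (|u z| + (c - F)) ∂μ = I₁ + m₁ * (c - F) := by
      rw [integral_add hi₁ (integrableOn_const hμ₁.2.ne), setIntegral_const,
        smul_eq_mul, measureReal_def, ← hI₁, ← hm₁d]
    have e2 : ∫ z in B₂, (|u z| + (c - F)) ∂μ = I₂ + m₂ * (c - F) := by
      rw [integral_add hi₂ (integrableOn_const hμ₂.2.ne), setIntegral_const,
        smul_eq_mul, measureReal_def, ← hI₂, ← hm₂d]
    rw [e1, e2] at hmono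
    have : E * (F - c) = m₁ * (c - F) - m₂ * (c - F) := by rw [hE]; ring
    linarith
  -- average comparison
  have havg : F - (E / m₂) * c ≤ I₂ / m₂ := by
    have hFI : m₁ * F = I₁ := by rw [hF]; field_simp
    have h2 : m₂ * F - E * c ≤ I₂ := by
      have hm₂F : m₂ * F = m₁ * F + E * F := by rw [hE]; ring
      nlinarith [hlow, hFI, hm₂F]
    rw [sub_le_iff_le_add, div_add' _ _ _ hm₂.ne', le_div_iff₀ hm₂]
    have hEq : E / m₂ * c * m₂ = E * c := by field_simp
    nlinarith [h2, hEq]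
  -- bound on the error term
  have hρ : s ^ α * ((E / m₂) * c) ≤ ((2:ℝ) ^ (α + 2*β) + K * 2 ^ (δ + β)) * N * d ^ (α + β) := by
    have hsα : (0:ℝ) ≤ s ^ α := Real.rpow_nonneg hs.le α
    rcases le_or_gt r d with hrd | hdr
    · -- small radii : crude bound
      have hρ1 : E / m₂ ≤ 1 := by
        apply div_le_one_of_le₀ _ hm₂.le
        rw [hE]; linarith [hm₁]
      have hs2d : s ≤ 2 * d := by rw [hss]; linarith
      have h2b : (2:ℝ) ^ β * 2 ^ (α + β) = 2 ^ (α + 2*β) := by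
        rw [← Real.rpow_add two_pos]; ring_nf
      have step1 : s ^ α * ((E / m₂) * c) ≤ s ^ α * c := by
        have : (E / m₂) * c ≤ 1 * c := mul_le_mul_of_nonneg_right hρ1 hcnn
        rw [one_mul] at this
        exact mul_le_mul_of_nonneg_left this hsα
      have step2 : s ^ α * c = N * 2 ^ β * s ^ (α + β) := by
        rw [hc, Real.mul_rpow two_pos.le hs.le, Real.rpow_add hs]; ring
      have step3 : N * 2 ^ β * s ^ (α + β) ≤ N * 2 ^ β * (2*d) ^ (α + β) :=
        mul_le_mul_of_nonneg_left
          (Real.rpow_le_rpow hs.le hs2d (by positivity)) (by positivity)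
      have step4 : N * 2 ^ β * (2*d) ^ (α + β) = 2 ^ (α + 2*β) * N * d ^ (α + β) := by
        rw [Real.mul_rpow two_pos.le hd.le, ← h2b]; ring
      have hnonneg : 0 ≤ K * 2 ^ (δ + β) * N * d ^ (α + β) := by positivity
      calc s ^ α * ((E / m₂) * c) ≤ N * 2 ^ β * (2*d) ^ (α + β) := by
            rw [← step2] at step3; linarith
        _ = 2 ^ (α + 2*β) * N * d ^ (α + β) := step4
        _ ≤ ((2:ℝ) ^ (α + 2*β) + K * 2 ^ (δ + β)) * N * d ^ (α + β) := by nlinarith [hnonneg]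
    · -- large radii : annular decay
      have h2d : 2 * d < s := by rw [hss]; linarith
      have hsubball : ball b (s - 2*d) ⊆ B₁ := by
        intro w hw
        rw [mem_ball] at hw
        rw [hB₁, mem_ball]
        have hba : dist b a = d := by rw [hdd, dist_comm]
        have htri : dist w a ≤ dist w b + dist b a := dist_triangle w b a
        rw [hba] at htri
        have : (s - 2*d) + d ≤ r := by rw [hss]; linarith
        linarith
      have hAsub : B₂ \ B₁ ⊆ B₂ \ ball b (s - 2*d) := Set.diff_subset_diff_right hsubball
      have hμann := hann b s (2*d) hs (by positivity) h2d
      have hmE : E ≤ K * (2*d/s) ^ δ * m₂ := by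
        have h1 : μ (B₂ \ B₁) ≤ ENNReal.ofReal (K * (2*d/s) ^ δ) * μ B₂ :=
          le_trans (measure_mono hAsub) hμann
        have hne : ENNReal.ofReal (K * (2*d/s) ^ δ) * μ B₂ ≠ ∞ :=
          ENNReal.mul_ne_top ENNReal.ofReal_ne_top hμ₂.2.ne
        have h2 := ENNReal.toReal_mono hne h1
        rw [ENNReal.toReal_mul, ENNReal.toReal_ofReal (by positivity)] at h2
        -- m₂ ≤ m₁ + (μ (B₂ \ B₁)).toReal
        have hsplit : μ B₂ ≤ μ B₁ + μ (B₂ \ B₁) := by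
          conv_lhs => rw [← Set.union_diff_cancel hsub]
          exact measure_union_le _ _
        have hfin : μ B₁ + μ (B₂ \ B₁) ≠ ∞ := by
          apply ENNReal.add_ne_top.2
          exact ⟨hμ₁.2.ne, (lt_of_le_of_lt (measure_mono Set.diff_subset) hμ₂.2).ne⟩
        have h3 := ENNReal.toReal_mono hfin hsplit
        rw [ENNReal.toReal_add hμ₁.2.ne
          (lt_of_le_of_lt (measure_mono Set.diff_subset) hμ₂.2).ne] at h3
        rw [hE, ← hm₂d, ← hm₁d] at *
        linarith
      have hρ2 : E / m₂ ≤ K * (2*d/s) ^ δ := (div_le_iff₀ hm₂).2 hmE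
      have step1 : s ^ α * ((E / m₂) * c) ≤ s ^ α * ((K * (2*d/s) ^ δ) * c) :=
        mul_le_mul_of_nonneg_left (mul_le_mul_of_nonneg_right hρ2 hcnn) hsα
      have hrw : s ^ α * ((K * (2*d/s) ^ δ) * c)
          = K * 2 ^ (δ + β) * N * (d ^ δ * s ^ (α + β - δ)) := by
        have e1 : ((2:ℝ)*d/s) ^ δ = 2^δ * d^δ / s^δ := by
          rw [Real.div_rpow (by positivity) hs.le, Real.mul_rpow two_pos.le hd.le]
        have e2 : ((2:ℝ)*s) ^ β = 2^β * s^β := Real.mul_rpow two_pos.le hs.le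
        have e3 : (2:ℝ)^(δ+β) = 2^δ * 2^β := Real.rpow_add two_pos δ β
        have e4 : s^(α+β-δ) = s^α * s^β / s^δ := by
          rw [Real.rpow_sub hs, Real.rpow_add hs]
        have hsδ : s^δ ≠ 0 := (Real.rpow_pos_of_pos hs δ).ne'
        rw [hc, e1, e2, e3, e4]
        field_simp
      have hsd : s ^ (α + β - δ) ≤ d ^ (α + β - δ) :=
        Real.rpow_le_rpow_of_nonpos hd hds.le (by linarith)
      have hstep2 : d ^ δ * s ^ (α + β - δ) ≤ d ^ (α + β) := by
        have hdd2 : d ^ δ * d ^ (α + β - δ) = d ^ (α + β) := by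
          rw [← Real.rpow_add hd]; ring_nf
        have hdδ : (0:ℝ) ≤ d ^ δ := Real.rpow_nonneg hd.le δ
        nlinarith [hsd, hdδ]
      have hKN : (0:ℝ) ≤ K * 2 ^ (δ + β) * N := by positivity
      have hnonneg : 0 ≤ (2:ℝ) ^ (α + 2*β) * N * d ^ (α + β) := by positivity
      calc s ^ α * ((E / m₂) * c) ≤ K * 2 ^ (δ + β) * N * (d ^ δ * s ^ (α + β - δ)) := by
            rw [← hrw]; exact step1
        _ ≤ K * 2 ^ (δ + β) * N * d ^ (α + β) := mul_le_mul_of_nonneg_left hstep2 hKN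
        _ ≤ ((2:ℝ) ^ (α + 2*β) + K * 2 ^ (δ + β)) * N * d ^ (α + β) := by nlinarith [hnonneg]
  -- put everything together
  have hfin : r ^ α * F ≤ s ^ α * (I₂ / m₂) + s ^ α * ((E / m₂) * c) := by
    have h1 : r ^ α ≤ s ^ α := Real.rpow_le_rpow hr.le hrs.le hα.le
    calc r ^ α * F ≤ s ^ α * F := mul_le_mul_of_nonneg_right h1 hFnn
      _ ≤ s ^ α * (I₂ / m₂ + (E / m₂) * c) :=
          mul_le_mul_of_nonneg_left (by linarith [havg]) (Real.rpow_nonneg hs.le α)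
      _ = s ^ α * (I₂ / m₂) + s ^ α * ((E / m₂) * c) := by ring
  rw [setAverage_eq, setAverage_eq, smul_eq_mul, smul_eq_mul, measureReal_def, measureReal_def]
  have e1 : (μ B₁).toReal⁻¹ * ∫ x in B₁, |u x| ∂μ = F := by
    rw [hF, hI₁, hm₁d]; exact inv_mul_eq_div _ _
  have e2 : (μ B₂).toReal⁻¹ * ∫ x in B₂, |u x| ∂μ = I₂ / m₂ := by
    rw [hI₂, hm₂d]; exact inv_mul_eq_div _ _
  rw [e1, e2]
  linarith [hfin, hρ]

/-- Under the δ-annular decay property with `β > 0`, `α > 0`, `α + β ≤ δ`,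
if `u` is β-Hölder continuous (seminorm at most `N`) and `𝓜_α u` is finite, then
`𝓜_α u` is `(α+β)`-Hölder continuous with `‖𝓜_α u‖_{C^{0,α+β}} ≤ C ‖u‖_{C^{0,β}}`. -/
theorem frMax_holder_to_holder
    {X : Type*} [MetricSpace X] [MeasurableSpace X] (μ : Measure X)
    (cd : ℝ≥0∞) (hcd : ∀ (z : X) (s : ℝ), 0 < s → μ (ball z (2 * s)) ≤ cd * μ (ball z s))
    (hball : ∀ (z : X) (s : ℝ), 0 < s → 0 < μ (ball z s) ∧ μ (ball z s) < ∞)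
    (δ : ℝ) (hδ0 : 0 < δ) (hδ1 : δ ≤ 1)
    (K : ℝ) (hK : 0 < K)
    (hann : ∀ (z : X) (R h : ℝ), 0 < R → 0 < h → h < R →
      μ (ball z R \ ball z (R - h)) ≤ ENNReal.ofReal (K * (h / R) ^ δ) * μ (ball z R))
    (α β : ℝ) (hα : 0 < α) (hβ : 0 < β) (hαβ : α + β ≤ δ) :
    ∃ C > (0 : ℝ), ∀ (u : X → ℝ) (N : ℝ), 0 ≤ N →
      (∀ (z : X) (s : ℝ), 0 < s → IntegrableOn u (ball z s) μ) →
      (∀ z w : X, |u z - u w| ≤ N * dist z w ^ β) →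
      (∀ x : X, BddAbove {t : ℝ | ∃ r : ℝ, 0 < r ∧ t = r ^ α * ⨍ y in ball x r, |u y| ∂μ}) →
      ∀ x y : X, |frMax μ α u x - frMax μ α u y| ≤ C * N * dist x y ^ (α + β) := by
  refine ⟨(2:ℝ) ^ (α + 2*β) + K * 2 ^ (δ + β), by positivity, ?_⟩
  intro u N hN hint hHolder hbdd x y
  set C := (2:ℝ) ^ (α + 2*β) + K * 2 ^ (δ + β) with hC
  have key : ∀ a b : X, frMax μ α u a - frMax μ α u b ≤ C * N * dist a b ^ (α + β) := by
    intro a b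
    rcases eq_or_ne a b with rfl | hab
    · have h0 : dist a a = 0 := dist_self a
      rw [h0, Real.zero_rpow (by positivity : (0:ℝ) < α + β).ne']
      simp
    · have hd : 0 < dist a b := dist_pos.2 hab
      rw [sub_le_iff_le_add]
      unfold frMax
      refine csSup_le ⟨(1:ℝ) ^ α * ⨍ z in ball a 1, |u z| ∂μ, ⟨1, one_pos, rfl⟩⟩ ?_
      rintro t ⟨r, hr, rfl⟩
      have hcore := frMax_core μ hball δ K hK hann α β hα hβ hαβ u N hN hint hHolder
        a b hd r hr
      have hmem : (r + dist a b) ^ α * ⨍ z in ball b (r + dist a b), |u z| ∂μ ≤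
          sSup {t : ℝ | ∃ r : ℝ, 0 < r ∧ t = r ^ α * ⨍ z in ball b r, |u z| ∂μ} :=
        le_csSup (hbdd b) ⟨r + dist a b, by positivity, rfl⟩
      rw [hC]
      linarith [hcore, hmem]
  rw [abs_sub_le_iff]
  refine ⟨key x y, ?_⟩
  rw [dist_comm]
  exact key y x
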